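/- The polynomial F = y·z·w³ + x·y·z³ + w·x·y³ + z·w·x³ is irreducible in the polynomial ring ℂ[x,y,z,w] (as a multivariate polynomial over ℂ). -/

import Mathlib

open MvPolynomial

/-- The homogeneous quintic `F = y·z·w³ + x·y·z³ + w·x·y³ + z·w·x³` in
variables `x = X 0`, `y = X 1`, `z = X 2`, `w = X 3` over `ℂ`. -/
noncomputable def quinticF : MvPolynomial (Fin 4) ℂ :=
  X 1 * X 2 * X 3 ^ 3 + X 0 * X 1 * X 2 ^ 3 + X 3 * X 0 * X 1 ^ 3 + X 2 * X 3 * X 0 ^ 3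

/-- Auxiliary: each variable is prime in `ℂ[y,z,w]`. -/
lemma primeX3 (i : Fin 3) : Prime (X i : MvPolynomial (Fin 3) ℂ) := by
  have h0 : Prime (X 0 : MvPolynomial (Fin 3) ℂ) := by
    rw [← MulEquiv.prime_iff (finSuccEquiv ℂ 2).toMulEquiv]
    have : (finSuccEquiv ℂ 2).toMulEquiv (X 0 : MvPolynomial (Fin 3) ℂ) = Polynomial.X :=
      finSuccEquiv_X_zero
    rw [this]
    exact Polynomial.prime_X
  have h : (renameEquiv ℂ (Equiv.swap (0 : Fin 3) i)) (X 0 : MvPolynomial (Fin 3) ℂ) = X i := by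
    simp [renameEquiv_apply, rename_X]
  rw [← h]
  exact (MulEquiv.prime_iff (renameEquiv ℂ (Equiv.swap (0 : Fin 3) i)).toMulEquiv).mpr h0

/-- Auxiliary: if `q` vanishes at `v` but `p` doesn't, then `q ∤ p`. -/
lemma not_dvd_of_eval (v : Fin 3 → ℂ) {p q : MvPolynomial (Fin 3) ℂ}
    (hp : eval v p ≠ 0) (hq : eval v q = 0) : ¬ q ∣ p := by
  rintro ⟨c, rfl⟩
  apply hp
  rw [map_mul, hq, zero_mul]

/-- The image of `quinticF` under `finSuccEquiv`, as a cubic in `x` over `ℂ[y,z,w]`. -/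
noncomputable def quinticF' : Polynomial (MvPolynomial (Fin 3) ℂ) :=
  Polynomial.C (X 1 * X 2) * Polynomial.X ^ 3
    + Polynomial.C (X 0 * X 1 ^ 3 + X 2 * X 0 ^ 3) * Polynomial.X
    + Polynomial.C (X 0 * X 1 * X 2 ^ 3)

lemma finSuccEquiv_quinticF : finSuccEquiv ℂ 3 quinticF = quinticF' := by
  have h1 : (1 : Fin 4) = (0 : Fin 3).succ := rfl
  have h2 : (2 : Fin 4) = (1 : Fin 3).succ := rfl
  have h3 : (3 : Fin 4) = (2 : Fin 3).succ := rfl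
  rw [quinticF, quinticF', h1, h2, h3]
  simp only [map_add, map_mul, map_pow, finSuccEquiv_X_zero, finSuccEquiv_X_succ,
    Polynomial.C_mul, Polynomial.C_pow, Polynomial.C_add]
  ring

lemma coeff0 : quinticF'.coeff 0 = X 0 * X 1 * X 2 ^ 3 := by
  simp only [quinticF', Polynomial.coeff_add, Polynomial.coeff_C_mul, Polynomial.coeff_X_pow,
    Polynomial.coeff_X, Polynomial.coeff_C]
  norm_num

lemma coeff1 : quinticF'.coeff 1 = X 0 * X 1 ^ 3 + X 2 * X 0 ^ 3 := by
  simp only [quinticF', Polynomial.coeff_add, Polynomial.coeff_C_mul, Polynomial.coeff_X_pow,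
    Polynomial.coeff_X, Polynomial.coeff_C]
  norm_num

lemma coeff2 : quinticF'.coeff 2 = 0 := by
  simp only [quinticF', Polynomial.coeff_add, Polynomial.coeff_C_mul, Polynomial.coeff_X_pow,
    Polynomial.coeff_X, Polynomial.coeff_C]
  norm_num

lemma coeff3 : quinticF'.coeff 3 = X 1 * X 2 := by
  simp only [quinticF', Polynomial.coeff_add, Polynomial.coeff_C_mul, Polynomial.coeff_X_pow,
    Polynomial.coeff_X, Polynomial.coeff_C]
  norm_num

lemma natDegree_quinticF' : quinticF'.natDegree = 3 := by
  unfold quinticF'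
  compute_degree!

lemma quinticF'_irreducible : Irreducible quinticF' := by
  have hP : (Ideal.span {(X 0 : MvPolynomial (Fin 3) ℂ)}).IsPrime :=
    (Ideal.span_singleton_prime (X_ne_zero _)).mpr (primeX3 0)
  have heis : quinticF'.IsEisensteinAt (Ideal.span {(X 0 : MvPolynomial (Fin 3) ℂ)}) := by
    refine ⟨?_, ?_, ?_⟩
    · -- leading coefficient not in (y)
      rw [Polynomial.leadingCoeff, natDegree_quinticF', coeff3, Ideal.mem_span_singleton]
      exact not_dvd_of_eval (fun i => if i = 0 then (0 : ℂ) else 1) (by simp) (by simp)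
    · -- lower coefficients in (y)
      intro n hn
      rw [natDegree_quinticF'] at hn
      interval_cases n
      · rw [coeff0, Ideal.mem_span_singleton]
        exact ⟨X 1 * X 2 ^ 3, by ring⟩
      · rw [coeff1, Ideal.mem_span_singleton]
        exact ⟨X 1 ^ 3 + X 2 * X 0 ^ 2, by ring⟩
      · rw [coeff2]; exact Ideal.zero_mem _
    · -- constant coefficient not in (y)^2
      rw [coeff0, Ideal.span_singleton_pow, Ideal.mem_span_singleton]
      rintro ⟨c, hc⟩
      have hyc : X 0 * (X 1 * X 2 ^ 3) = X 0 * (X 0 * c) := by linear_combination hc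
      have hcancel := mul_left_cancel₀ (X_ne_zero (R := ℂ) (0 : Fin 3)) hyc
      exact not_dvd_of_eval (fun i => if i = 0 then (0 : ℂ) else 1)
        (p := X 1 * X 2 ^ 3) (by simp) (by simp) ⟨c, hcancel⟩
  have hprim : quinticF'.IsPrimitive := by
    intro r hr
    rw [Polynomial.C_dvd_iff_dvd_coeff] at hr
    have h3 : r ∣ X 1 * X 2 := by have := hr 3; rwa [coeff3] at this
    have h1 : r ∣ X 0 * X 1 ^ 3 + X 2 * X 0 ^ 3 := by have := hr 1; rwa [coeff1] at this
    by_contra hru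
    have hr0 : r ≠ 0 := by
      rintro rfl
      exact (mul_ne_zero (X_ne_zero (R := ℂ) (1 : Fin 3)) (X_ne_zero _))
        (zero_dvd_iff.mp h3)
    obtain ⟨p, hpirr, hpr⟩ := WfDvdMonoid.exists_irreducible_factor hru hr0
    have hpzw : p ∣ X 1 * X 2 := hpr.trans h3
    rcases hpirr.prime.2.2 _ _ hpzw with hpz | hpw
    · have hd : (X 1 : MvPolynomial (Fin 3) ℂ) ∣ X 0 * X 1 ^ 3 + X 2 * X 0 ^ 3 :=
        ((hpirr.associated_of_dvd (primeX3 1).irreducible hpz).symm.dvd.trans hpr).trans h1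
      exact not_dvd_of_eval (fun i => if i = 1 then (0 : ℂ) else 1)
        (by simp) (by simp) hd
    · have hd : (X 2 : MvPolynomial (Fin 3) ℂ) ∣ X 0 * X 1 ^ 3 + X 2 * X 0 ^ 3 :=
        ((hpirr.associated_of_dvd (primeX3 2).irreducible hpw).symm.dvd.trans hpr).trans h1
      exact not_dvd_of_eval (fun i => if i = 2 then (0 : ℂ) else 1)
        (by simp) (by simp) hd
  exact heis.irreducible hP hprim (by rw [natDegree_quinticF']; norm_num)

/-- The polynomial `F = y·z·w³ + x·y·z³ + w·x·y³ + z·w·x³` is irreducible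
in `ℂ[x,y,z,w]`. -/
theorem quinticF_irreducible : Irreducible quinticF := by
  have h := quinticF'_irreducible
  rw [← finSuccEquiv_quinticF] at h
  exact (MulEquiv.irreducible_iff (finSuccEquiv ℂ 3)).mp h
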